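/- For all integers k ≥ j ≥ 0, the sum over i from j to k of (1/(i+1)) * C(2i,i) * C(2(k-i), k-i) equals ((2k+1-2j)/(k+1)) * C(2j,j) * C(2(k-j), k-j). -/

import Mathlib

open Finset BigOperators

/-- A word `w` of length `n` over the alphabet `[k]` contains the permutation
pattern `p` of length `m`. -/
def WordContains {n k m : ℕ} (w : Fin n → Fin k) (p : Equiv.Perm (Fin m)) : Prop :=
  ∃ ι : Fin m → Fin n, StrictMono ι ∧ ∀ a b : Fin m, w (ι a) < w (ι b) ↔ p a < p b

/-- The number of words of length `n` over the alphabet `[k]` avoiding the pattern `p`. -/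
noncomputable def wordAvoidCount (n k m : ℕ) (p : Equiv.Perm (Fin m)) : ℕ :=
  Nat.card {w : Fin n → Fin k // ¬ WordContains w p}

/-- An ordered set partition of `[n]` into `k` blocks. -/
structure OrdPartition (n k : ℕ) where
  blocks : Fin k → Finset (Fin n)
  blocks_nonempty : ∀ i, (blocks i).Nonempty
  blocks_disjoint : ∀ i j, i ≠ j → Disjoint (blocks i) (blocks j)
  blocks_cover : ∀ x : Fin n, ∃ i, x ∈ blocks i

/-- An ordered set partition contains the permutation pattern `p`. -/
def OPContains {n k m : ℕ} (P : OrdPartition n k) (p : Equiv.Perm (Fin m)) : Prop :=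
  ∃ ι : Fin m → Fin k, StrictMono ι ∧ ∃ b : Fin m → Fin n,
    (∀ j, b j ∈ P.blocks (ι j)) ∧ ∀ a c : Fin m, b a < b c ↔ p a < p c

/-- The number of ordered set partitions of `[n]` into `k` blocks avoiding `p`. -/
noncomputable def opAvoidCount (n k m : ℕ) (p : Equiv.Perm (Fin m)) : ℕ :=
  Nat.card {P : OrdPartition n k // ¬ OPContains P p}

/-- The pattern 321. -/
def p321 : Equiv.Perm (Fin 3) := Fin.revPerm

theorem sum_catalan_convolution (k j : ℕ) (hjk : j ≤ k) :
    ∑ i ∈ Finset.Icc j k,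
        (1 : ℚ) / (i + 1) * (Nat.choose (2 * i) i) * (Nat.choose (2 * (k - i)) (k - i))
      = ((2 * k + 1 : ℚ) - 2 * j) / (k + 1) *
          (Nat.choose (2 * j) j) * (Nat.choose (2 * (k - j)) (k - j)) := by
  obtain ⟨d, rfl⟩ := Nat.exists_eq_add_of_le hjk
  clear hjk
  induction d generalizing j with
  | zero =>
    simp [Nat.sub_self]
  | succ d ih =>
    have hsplit : Finset.Icc j (j + (d + 1)) = insert j (Finset.Icc (j+1) (j+1+d)) := by
      ext x; simp [Finset.mem_Icc]; omega
    rw [hsplit, Finset.sum_insert (by simp)]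
    have key := ih (j+1)
    have hre : ∀ i ∈ Finset.Icc (j+1) (j+1+d),
        (1 : ℚ) / (i + 1) * (Nat.choose (2 * i) i) * (Nat.choose (2 * (j + (d+1) - i)) (j + (d+1) - i))
        = (1 : ℚ) / (i + 1) * (Nat.choose (2 * i) i) * (Nat.choose (2 * (j + 1 + d - i)) (j + 1 + d - i)) := by
      intro i hi
      have : j + (d+1) - i = j + 1 + d - i := by omega
      rw [this]
    rw [Finset.sum_congr rfl hre, key]
    have h1 : j + 1 + d - (j + 1) = d := by omega
    have h2 : j + (d + 1) - j = d + 1 := by omega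
    rw [h1, h2]
    -- now pure algebra/recurrence
    have hA : ((j + 1 : ℕ) : ℚ) * Nat.centralBinom (j+1) = 2 * (2 * j + 1) * Nat.centralBinom j := by
      exact_mod_cast congrArg (Nat.cast : ℕ → ℚ) (Nat.succ_mul_centralBinom_succ j)
    have hC : ((d + 1 : ℕ) : ℚ) * Nat.centralBinom (d+1) = 2 * (2 * d + 1) * Nat.centralBinom d := by
      exact_mod_cast congrArg (Nat.cast : ℕ → ℚ) (Nat.succ_mul_centralBinom_succ d)
    have eA : (Nat.choose (2 * (j+1)) (j+1) : ℚ) = Nat.centralBinom (j+1) := rfl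
    have eC : (Nat.choose (2 * (d+1)) (d+1) : ℚ) = Nat.centralBinom (d+1) := rfl
    have ea : (Nat.choose (2 * j) j : ℚ) = Nat.centralBinom j := rfl
    have eb : (Nat.choose (2 * d) d : ℚ) = Nat.centralBinom d := rfl
    rw [eA, eC, ea, eb]
    set A := (Nat.centralBinom (j+1) : ℚ)
    set C := (Nat.centralBinom (d+1) : ℚ)
    set a := (Nat.centralBinom j : ℚ)
    set b := (Nat.centralBinom d : ℚ)
    push_cast at hA hC ⊢
    have hj1 : (j : ℚ) + 1 ≠ 0 := by positivity
    have hd1 : (d : ℚ) + 1 ≠ 0 := by positivity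
    have hk1 : (j : ℚ) + (d + 1) + 1 ≠ 0 := by positivity
    have hA' : A = 2 * (2 * j + 1) * a / (j + 1) := by field_simp [hj1]; linarith [hA]
    have hC' : C = 2 * (2 * d + 1) * b / (d + 1) := by field_simp [hd1]; linarith [hC]
    rw [hA', hC']
    field_simp
    ring
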